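/- For f holomorphic on the unit disc with ‖f‖_{H^p} < ∞, the pointwise Hardy–Littlewood estimate holds: there exists C_p > 0 depending only on p such that |f(z)| ≤ C_p (1-|z|)^{-1/p} ‖f‖_{H^p} for every z ∈ 𝔻. -/

import Mathlib

open MeasureTheory Real Filter Set

noncomputable def hpMean (f : ℂ → ℂ) (p r : ℝ) : ℝ :=
  (2 * π)⁻¹ * ∫ θ in (0:ℝ)..(2 * π), ‖f ((r:ℂ) * Complex.exp ((θ:ℝ) * Complex.I))‖ ^ p

def MemHp (p : ℝ) (f : ℂ → ℂ) : Prop :=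
  DifferentiableOn ℂ f (Metric.ball 0 1) ∧
  BddAbove (Set.range fun r : Set.Ico (0:ℝ) 1 => hpMean f p r)

def HLp (p : ℝ) : Prop :=
  ∃ C > (0:ℝ), ∀ f : ℂ → ℂ, MemHp p f →
      ∀ z ∈ Metric.ball (0:ℂ) 1,
        ‖f z‖ ≤
          C * (1 - ‖z‖) ^ (-p⁻¹) *
            (⨆ r : Set.Ico (0:ℝ) 1, hpMean f p r) ^ p⁻¹



lemma contAux {f : ℂ → ℂ} (hf : ContinuousOn f (Metric.ball 0 1)) {r : ℝ}
    (hr0 : 0 ≤ r) (hr1 : r < 1) :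
    Continuous fun θ : ℝ => ‖f ((r:ℂ) * Complex.exp ((θ:ℝ) * Complex.I))‖ := by
  have hmap : ∀ θ : ℝ, ((r:ℂ) * Complex.exp ((θ:ℝ) * Complex.I)) ∈ Metric.ball (0:ℂ) 1 := by
    intro θ
    simp only [Metric.mem_ball, Complex.dist_eq, sub_zero, norm_mul,
      Complex.norm_exp_ofReal_mul_I, Complex.norm_real, Real.norm_eq_abs, mul_one, abs_of_nonneg hr0]
    exact hr1
  have hc : Continuous fun θ : ℝ => (r:ℂ) * Complex.exp ((θ:ℝ) * Complex.I) := by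
    exact continuous_const.mul (Complex.continuous_exp.comp
      (Complex.continuous_ofReal.mul continuous_const))
  exact continuous_norm.comp (hf.comp_continuous hc hmap)

lemma hpMean_nonneg (f : ℂ → ℂ) (p r : ℝ) : 0 ≤ hpMean f p r := by
  unfold hpMean
  refine mul_nonneg (by positivity) ?_
  exact intervalIntegral.integral_nonneg Real.two_pi_pos.le
    (fun θ _ => Real.rpow_nonneg (norm_nonneg _) _)

lemma holder_mean {u v : ℝ → ℝ} (hu : Continuous u) (hv : Continuous v)
    (hu0 : ∀ x, 0 ≤ u x) (hv0 : ∀ x, 0 ≤ v x) {s t : ℝ} (hst : s.HolderConjugate t) :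
    ∫ θ in (0:ℝ)..(2*π), u θ * v θ ≤
      (∫ θ in (0:ℝ)..(2*π), u θ ^ s) ^ (1/s) * (∫ θ in (0:ℝ)..(2*π), v θ ^ t) ^ (1/t) := by
  have h1 : (0:ℝ) ≤ 2*π := Real.two_pi_pos.le
  rw [intervalIntegral.integral_of_le h1, intervalIntegral.integral_of_le h1,
    intervalIntegral.integral_of_le h1]
  set μ : Measure ℝ := volume.restrict (Ioc (0:ℝ) (2*π)) with hμ
  haveI : IsFiniteMeasure μ := by
    constructor
    rw [hμ, Measure.restrict_apply_univ]
    exact measure_Ioc_lt_top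
  have memaux : ∀ (w : ℝ → ℝ), Continuous w → ∀ e : ℝ, MemLp w (ENNReal.ofReal e) μ := by
    intro w hw e
    obtain ⟨C, hC⟩ := (isCompact_Icc (a := (0:ℝ)) (b := 2*π)).exists_bound_of_continuousOn
      hw.continuousOn
    refine MemLp.of_bound hw.aestronglyMeasurable C ?_
    filter_upwards [ae_restrict_mem measurableSet_Ioc] with x hx
    exact hC x (Ioc_subset_Icc_self hx)
  exact integral_mul_le_Lp_mul_Lq_of_nonneg hst
    (Eventually.of_forall hu0) (Eventually.of_forall hv0)
    (memaux u hu s) (memaux v hv t)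

lemma mean_rpow_le {u : ℝ → ℝ} (hu : Continuous u) (hu0 : ∀ x, 0 ≤ u x) {s : ℝ}
    (hs : 1 < s) :
    (2*π)⁻¹ * ∫ θ in (0:ℝ)..(2*π), u θ ≤
      ((2*π)⁻¹ * ∫ θ in (0:ℝ)..(2*π), u θ ^ s) ^ s⁻¹ := by
  have hst : s.HolderConjugate (Real.conjExponent s) := Real.HolderConjugate.conjExponent hs
  set t := Real.conjExponent s with ht
  have key := holder_mean hu continuous_const hu0 (fun _ => zero_le_one) hst
  simp only [mul_one, Real.one_rpow, intervalIntegral.integral_const, smul_eq_mul,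
    sub_zero] at key
  have h2π : (0:ℝ) < 2*π := Real.two_pi_pos
  have hX : 0 ≤ ∫ θ in (0:ℝ)..(2*π), u θ ^ s :=
    intervalIntegral.integral_nonneg h2π.le (fun θ _ => Real.rpow_nonneg (hu0 θ) s)
  have hexp : (1:ℝ)/t - 1 = -s⁻¹ := by
    have := hst.inv_add_inv_eq_one
    rw [one_div]
    linarith
  calc (2*π)⁻¹ * ∫ θ in (0:ℝ)..(2*π), u θ
      ≤ (2*π)⁻¹ * ((∫ θ in (0:ℝ)..(2*π), u θ ^ s) ^ (1/s) * (2*π) ^ (1/t)) :=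
        mul_le_mul_of_nonneg_left key (by positivity)
    _ = (2*π) ^ (-s⁻¹) * (∫ θ in (0:ℝ)..(2*π), u θ ^ s) ^ s⁻¹ := by
        rw [← hexp, Real.rpow_sub h2π, Real.rpow_one, one_div]
        ring
    _ = ((2*π)⁻¹ * ∫ θ in (0:ℝ)..(2*π), u θ ^ s) ^ s⁻¹ := by
        rw [Real.mul_rpow (by positivity) hX, Real.inv_rpow h2π.le,
          ← Real.rpow_neg h2π.le]
lemma kernel_integral {r : ℝ} (hr : 0 < r) {z : ℂ} (hz : ‖z‖ < r) :
    ∫ θ in (0:ℝ)..(2*π), (r / ‖circleMap 0 r θ - z‖) ^ (2:ℝ)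
      = 2*π*r^2/(r^2 - ‖z‖^2) := by
  have hz0 : 0 ≤ ‖z‖ := norm_nonneg z
  have hden : r^2 - ‖z‖^2 > 0 := by nlinarith
  set g : ℂ → ℂ := fun w => -Complex.I * (r:ℂ)^2 * ((r:ℂ)^2 - (starRingEnd ℂ) z * w)⁻¹ with hg
  have hne : ∀ w ∈ Metric.closedBall (0:ℂ) r, ((r:ℂ)^2 - (starRingEnd ℂ) z * w) ≠ 0 := by
    intro w hw h
    have hwle : ‖w‖ ≤ r := by
      simpa [Complex.dist_eq] using Metric.mem_closedBall.1 hw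
    have h2 : (r:ℂ)^2 = (starRingEnd ℂ) z * w := by linear_combination h
    have := congrArg (‖·‖) h2
    simp only [norm_mul, norm_pow, Complex.norm_real, Real.norm_eq_abs, Complex.norm_conj, abs_of_pos hr] at this
    nlinarith [norm_nonneg w]
  have hgd : DiffContOnCl ℂ g (Metric.ball 0 r) := by
    apply DifferentiableOn.diffContOnCl
    rw [closure_ball (0:ℂ) hr.ne']
    have hd : DifferentiableOn ℂ (fun w : ℂ => ((r:ℂ)^2 - (starRingEnd ℂ) z * w)) (Metric.closedBall 0 r) :=
      (differentiableOn_const _).sub ((differentiableOn_const _).mul differentiableOn_id)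
    exact (differentiableOn_const _).mul (hd.inv hne)
  have hzb : z ∈ Metric.ball (0:ℂ) r := by
    simpa [Complex.dist_eq] using hz
  have hcif := hgd.circleIntegral_sub_inv_smul hzb
  -- compute RHS
  have hgz : (2 * (π:ℝ) * Complex.I : ℂ) • g z = ((2*π*r^2/(r^2 - ‖z‖^2) : ℝ) : ℂ) := by
    have hzz : ((r:ℂ)^2 - (starRingEnd ℂ) z * z) = ((r^2 - ‖z‖^2 : ℝ) : ℂ) := by
      rw [mul_comm, Complex.mul_conj, Complex.normSq_eq_norm_sq]
      push_cast
      ring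
    rw [hg]
    simp only [smul_eq_mul, hzz]
    have : ((r^2 - ‖z‖^2 : ℝ) : ℂ) ≠ 0 := by
      exact_mod_cast Complex.ofReal_ne_zero.2 hden.ne'
    field_simp
    ring_nf
    simp [Complex.I_sq]
    have h' : ((r:ℂ)^2 - ((‖z‖:ℝ):ℂ)^2) ≠ 0 := by exact_mod_cast this
    field_simp
  -- pointwise identity on the circle
  have hpt : ∀ θ : ℝ, (deriv (circleMap 0 r) θ) • ((circleMap 0 r θ - z)⁻¹ • g (circleMap 0 r θ))
      = (((r / ‖circleMap 0 r θ - z‖) ^ (2:ℝ) : ℝ) : ℂ) := by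
    intro θ
    set w := circleMap 0 r θ with hwdef
    have habs : ‖w‖ = r := by
      rw [hwdef, norm_circleMap_zero, abs_of_pos hr]
    have hw : w * (starRingEnd ℂ) w = (r:ℂ)^2 := by
      rw [Complex.mul_conj, Complex.normSq_eq_norm_sq, habs]
      push_cast; ring
    have hw0 : w ≠ 0 := by
      intro h
      rw [h, norm_zero] at habs
      exact hr.ne habs
    have hwz : w - z ≠ 0 := by
      intro h
      rw [sub_eq_zero] at h
      rw [← h, habs] at hz
      exact lt_irrefl _ hz
    have hwzc : (starRingEnd ℂ) w - (starRingEnd ℂ) z ≠ 0 := by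
      intro h
      rw [sub_eq_zero] at h
      exact hwz (sub_eq_zero.2 ((starRingEnd ℂ).injective h))
    have hd2 : ((r:ℂ)^2 - (starRingEnd ℂ) z * w) ≠ 0 := by
      refine hne w ?_
      simp [Complex.dist_eq, habs]
    have habs2 : ((‖w - z‖ : ℂ))^2 = (w - z) * ((starRingEnd ℂ) w - (starRingEnd ℂ) z) := by
      rw [← Complex.ofReal_pow, ← Complex.normSq_eq_norm_sq, ← map_sub, ← Complex.mul_conj]
    have hwabs : (0:ℝ) < ‖w - z‖ := norm_pos_iff.mpr hwz
    rw [deriv_circleMap, ← hwdef]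
    have : ((r / ‖w - z‖) ^ (2:ℝ) : ℝ) = r^2 / (‖w - z‖ ^ 2) := by
      rw [show ((2:ℝ)) = ((2:ℕ):ℝ) by norm_num, Real.rpow_natCast]
      rw [div_pow]
    have hkey : (r:ℂ)^2 - (starRingEnd ℂ) z * w = w * ((starRingEnd ℂ) w - (starRingEnd ℂ) z) := by
      rw [← hw]; ring
    rw [this]
    push_cast
    rw [habs2, hg]
    simp only [smul_eq_mul]
    rw [hkey]
    field_simp
    ring_nf
    simp only [Complex.I_sq]
    ring
  -- now convert the interval integral
  have hLHS : (∮ w in C(0, r), (w - z)⁻¹ • g w)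
      = ((∫ θ in (0:ℝ)..(2*π), (r / ‖circleMap 0 r θ - z‖) ^ (2:ℝ) : ℝ) : ℂ) := by
    rw [circleIntegral]
    rw [← intervalIntegral.integral_ofReal]
    exact intervalIntegral.integral_congr (fun θ _ => hpt θ)
  rw [hLHS, hgz] at hcif
  exact_mod_cast hcif

lemma isConj22 : (2:ℝ).HolderConjugate 2 := Real.HolderConjugate.two_two

lemma base2 : HLp 2 := by
  refine ⟨2, by norm_num, ?_⟩
  rintro f ⟨hfd, hfb⟩ z hz
  have hfc := hfd.continuousOn
  set a := ‖z‖ with ha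
  have ha0 : 0 ≤ a := norm_nonneg z
  have ha1 : a < 1 := by simpa [Complex.dist_eq] using hz
  set r : ℝ := (1+a)/2 with hrdef
  have har : a < r := by rw [hrdef]; linarith
  have hr1 : r < 1 := by rw [hrdef]; linarith
  have hr0 : 0 < r := by rw [hrdef]; linarith
  have hden : 0 < r^2 - a^2 := by nlinarith
  have h1a : 0 < 1 - a := by linarith
  set M : ℝ := ⨆ ρ : Set.Ico (0:ℝ) 1, hpMean f 2 ρ with hM
  have hle_M : hpMean f 2 r ≤ M := le_ciSup hfb ⟨r, ⟨hr0.le, hr1⟩⟩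
  have hM0 : 0 ≤ M := (hpMean_nonneg f 2 r).trans hle_M
  have hcirc : ∀ θ:ℝ, circleMap 0 r θ = (r:ℂ) * Complex.exp ((θ:ℝ) * Complex.I) :=
    fun θ => circleMap_zero r θ
  set F : ℝ → ℝ := fun θ => ‖f (circleMap 0 r θ)‖ with hF
  set G : ℝ → ℝ := fun θ => r / ‖circleMap 0 r θ - z‖ with hG
  have hFeq : F = fun θ:ℝ => ‖f ((r:ℂ) * Complex.exp ((θ:ℝ) * Complex.I))‖ :=
    funext fun θ => by simp only [hF, hcirc]
  have hFc : Continuous F := by rw [hFeq]; exact contAux hfc hr0.le hr1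
  have hGpos : ∀ θ:ℝ, 0 < ‖circleMap 0 r θ - z‖ := by
    intro θ
    refine norm_pos_iff.mpr fun hsub => ?_
    rw [sub_eq_zero] at hsub
    have h2 := norm_circleMap_zero r θ
    rw [hsub, abs_of_pos hr0, ← ha] at h2
    linarith
  have hGc : Continuous G :=
    continuous_const.div
      (continuous_norm.comp ((continuous_circleMap 0 r).sub continuous_const))
      (fun θ => (hGpos θ).ne')
  have hF0 : ∀ θ, 0 ≤ F θ := fun θ => norm_nonneg _
  have hG0 : ∀ θ, 0 ≤ G θ := fun θ => div_nonneg hr0.le (norm_nonneg _)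
  -- Cauchy integral formula
  have hzb : z ∈ Metric.ball (0:ℂ) r := by simpa [Complex.dist_eq] using har
  have hdc : DiffContOnCl ℂ f (Metric.ball 0 r) := by
    apply DifferentiableOn.diffContOnCl
    rw [closure_ball (0:ℂ) hr0.ne']
    exact hfd.mono (Metric.closedBall_subset_ball hr1)
  have hcif := hdc.circleIntegral_sub_inv_smul hzb
  have hnorm : (2*π) * ‖f z‖ ≤ ∫ θ in (0:ℝ)..(2*π), F θ * G θ := by
    have hs : ‖(2 * ↑π * Complex.I : ℂ) • f z‖ = (2*π) * ‖f z‖ := by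
      rw [norm_smul]
      simp only [norm_mul, Complex.norm_I, Complex.norm_two,
        Complex.norm_real, Real.norm_eq_abs, abs_of_pos Real.pi_pos, mul_one]
    rw [← hs, ← hcif, circleIntegral]
    refine le_trans (intervalIntegral.norm_integral_le_integral_norm Real.two_pi_pos.le)
      (le_of_eq (intervalIntegral.integral_congr fun θ _ => ?_))
    rw [deriv_circleMap, norm_smul, norm_smul]
    simp only [norm_mul, Complex.norm_I, mul_one, norm_circleMap_zero,
      abs_of_pos hr0, norm_inv]
    rw [hF, hG]
    field_simp
  have h1 : ‖f z‖ ≤ (2*π)⁻¹ * ∫ θ in (0:ℝ)..(2*π), F θ * G θ := by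
    rw [inv_mul_eq_div, le_div_iff₀ Real.two_pi_pos]
    linarith [hnorm]
  have h2 := holder_mean hFc hGc hF0 hG0 isConj22
  have h3 : ∫ θ in (0:ℝ)..(2*π), G θ ^ (2:ℝ) = 2*π*r^2/(r^2 - a^2) :=
    kernel_integral hr0 (by rw [← ha]; exact har)
  have h4 : (2*π)⁻¹ * ∫ θ in (0:ℝ)..(2*π), F θ ^ (2:ℝ) = hpMean f 2 r := by
    rw [hpMean]
    congr 1
    exact intervalIntegral.integral_congr fun θ _ => by rw [hFeq]
  have hFint0 : 0 ≤ ∫ θ in (0:ℝ)..(2*π), F θ ^ (2:ℝ) :=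
    intervalIntegral.integral_nonneg Real.two_pi_pos.le
      (fun θ _ => Real.rpow_nonneg (hF0 θ) _)
  have t1 : (∫ θ in (0:ℝ)..(2*π), F θ ^ (2:ℝ)) ^ ((1:ℝ)/2) ≤ (2*π)^((1:ℝ)/2) * M^((1:ℝ)/2) := by
    have : (∫ θ in (0:ℝ)..(2*π), F θ ^ (2:ℝ)) ≤ (2*π) * M := by
      have := hle_M
      rw [← h4] at this
      calc (∫ θ in (0:ℝ)..(2*π), F θ ^ (2:ℝ))
          = (2*π) * ((2*π)⁻¹ * ∫ θ in (0:ℝ)..(2*π), F θ ^ (2:ℝ)) := by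
            field_simp
        _ ≤ (2*π) * M := by
            exact mul_le_mul_of_nonneg_left this Real.two_pi_pos.le
    calc (∫ θ in (0:ℝ)..(2*π), F θ ^ (2:ℝ)) ^ ((1:ℝ)/2)
        ≤ ((2*π) * M) ^ ((1:ℝ)/2) :=
          Real.rpow_le_rpow hFint0 this (by norm_num)
      _ = (2*π)^((1:ℝ)/2) * M^((1:ℝ)/2) := Real.mul_rpow Real.two_pi_pos.le hM0
  have t2 : (∫ θ in (0:ℝ)..(2*π), G θ ^ (2:ℝ)) ^ ((1:ℝ)/2)
      = (2*π)^((1:ℝ)/2) * (r^2/(r^2-a^2))^((1:ℝ)/2) := by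
    rw [h3, mul_div_assoc, Real.mul_rpow Real.two_pi_pos.le
      (div_nonneg (by positivity) hden.le)]
  have t3 : (r^2/(r^2-a^2))^((1:ℝ)/2) ≤ 2 * (1-a)^(-(1:ℝ)/2) := by
    have hq : r^2/(r^2-a^2) ≤ 4/(1-a) := by
      rw [div_le_div_iff₀ hden h1a]
      nlinarith [hrdef, ha0, ha1, sq_nonneg (1+a), sq_nonneg (1-a), mul_nonneg ha0 ha0]
    have h4half : ((4:ℝ))^((1:ℝ)/2) = 2 := by
      rw [show (4:ℝ) = 2^(2:ℕ) by norm_num, ← Real.rpow_natCast (2:ℝ) 2,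
        ← Real.rpow_mul (by norm_num : (0:ℝ) ≤ 2)]
      norm_num
    have h42 : ((4:ℝ)/(1-a))^((1:ℝ)/2) = 2 * (1-a)^(-(1:ℝ)/2) := by
      rw [Real.div_rpow (by norm_num) h1a.le, h4half, div_eq_mul_inv,
        ← Real.rpow_neg h1a.le]
      norm_num
    rw [← h42]
    exact Real.rpow_le_rpow (div_nonneg (by positivity) hden.le) hq (by norm_num)
  have hhalf : (2*π)^((1:ℝ)/2) * (2*π)^((1:ℝ)/2) = 2*π := by
    rw [← Real.rpow_add Real.two_pi_pos]
    norm_num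
  calc ‖f z‖
      ≤ (2*π)⁻¹ * ∫ θ in (0:ℝ)..(2*π), F θ * G θ := h1
    _ ≤ (2*π)⁻¹ * ((∫ θ in (0:ℝ)..(2*π), F θ ^ (2:ℝ)) ^ ((1:ℝ)/2)
          * (∫ θ in (0:ℝ)..(2*π), G θ ^ (2:ℝ)) ^ ((1:ℝ)/2)) :=
        mul_le_mul_of_nonneg_left h2 (by positivity)
    _ ≤ (2*π)⁻¹ * (((2*π)^((1:ℝ)/2) * M^((1:ℝ)/2))
          * ((2*π)^((1:ℝ)/2) * (2 * (1-a)^(-(1:ℝ)/2)))) := by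
        have hGint0 : 0 ≤ ∫ θ in (0:ℝ)..(2*π), G θ ^ (2:ℝ) :=
          intervalIntegral.integral_nonneg Real.two_pi_pos.le
            (fun θ _ => Real.rpow_nonneg (hG0 θ) _)
        refine mul_le_mul_of_nonneg_left ?_ (by positivity)
        refine mul_le_mul t1 ?_ (Real.rpow_nonneg hGint0 _)
          (mul_nonneg (Real.rpow_nonneg Real.two_pi_pos.le _) (Real.rpow_nonneg hM0 _))
        rw [t2]
        exact mul_le_mul_of_nonneg_left t3 (Real.rpow_nonneg Real.two_pi_pos.le _)
    _ = (2*π)⁻¹ * (((2*π)^((1:ℝ)/2) * (2*π)^((1:ℝ)/2))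
          * (M^((1:ℝ)/2) * (2 * (1-a)^(-(1:ℝ)/2)))) := by ring
    _ = 2 * (1-a)^(-(1:ℝ)/2) * M^((1:ℝ)/2) := by
        rw [hhalf, inv_mul_cancel_left₀ Real.two_pi_pos.ne']
        ring
    _ = 2 * (1-a)^(-(2:ℝ)⁻¹) * M^((2:ℝ)⁻¹) := by
        rw [show -(1:ℝ)/2 = -(2:ℝ)⁻¹ by norm_num, show (1:ℝ)/2 = (2:ℝ)⁻¹ by norm_num]

lemma up_step {q : ℝ} (hq : 0 < q) (h : HLp q) : HLp (2*q) := by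
  obtain ⟨C, hC, hCf⟩ := h
  refine ⟨C ^ ((2:ℝ)⁻¹), Real.rpow_pos_of_pos hC _, ?_⟩
  rintro f ⟨hfd, hfb⟩ z hz
  have ha1 : ‖z‖ < 1 := by simpa [Complex.dist_eq] using hz
  have h1a : (0:ℝ) ≤ 1 - ‖z‖ := by linarith
  set g : ℂ → ℂ := fun w => (f w)^2 with hgdef
  have hint : ∀ ρ : ℝ, hpMean g q ρ = hpMean f (2*q) ρ := by
    intro ρ
    unfold hpMean
    congr 1
    refine intervalIntegral.integral_congr fun θ _ => ?_
    simp only [hgdef, norm_pow]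
    rw [← Real.rpow_natCast (‖f ((ρ:ℂ) * Complex.exp ((θ:ℝ) * Complex.I))‖) 2,
      ← Real.rpow_mul (norm_nonneg _)]
    norm_num
  have hrange : (fun ρ : Set.Ico (0:ℝ) 1 => hpMean g q ρ)
      = fun ρ : Set.Ico (0:ℝ) 1 => hpMean f (2*q) ρ := funext fun ρ => hint ρ
  have hgmem : MemHp q g := ⟨hfd.pow 2, by rw [hrange]; exact hfb⟩
  have key := hCf g hgmem z hz
  have hsup : (⨆ ρ : Set.Ico (0:ℝ) 1, hpMean g q ρ)
      = ⨆ ρ : Set.Ico (0:ℝ) 1, hpMean f (2*q) ρ := iSup_congr fun ρ => hint ρ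
  set M : ℝ := ⨆ ρ : Set.Ico (0:ℝ) 1, hpMean f (2*q) ρ with hM
  rw [hsup] at key
  have hM0 : 0 ≤ M :=
    (hpMean_nonneg f (2*q) 0).trans (le_ciSup hfb ⟨(0:ℝ), ⟨le_rfl, zero_lt_one⟩⟩)
  have habs : ‖g z‖ = ‖f z‖ ^ (2:ℕ) := by simp [hgdef]
  have hfz : ‖f z‖ = (‖g z‖) ^ ((2:ℝ)⁻¹) := by
    rw [habs, ← Real.rpow_natCast (‖f z‖) 2,
      ← Real.rpow_mul (norm_nonneg _)]
    norm_num
  rw [hfz]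
  calc (‖g z‖) ^ ((2:ℝ)⁻¹)
      ≤ (C * (1 - ‖z‖) ^ (-q⁻¹) * M ^ q⁻¹) ^ ((2:ℝ)⁻¹) :=
        Real.rpow_le_rpow (norm_nonneg _) key (by norm_num)
    _ = C ^ ((2:ℝ)⁻¹) * (1 - ‖z‖) ^ (-(2*q)⁻¹) * M ^ (2*q)⁻¹ := by
        rw [Real.mul_rpow (mul_nonneg hC.le (Real.rpow_nonneg h1a _)) (Real.rpow_nonneg hM0 _),
          Real.mul_rpow hC.le (Real.rpow_nonneg h1a _),
          ← Real.rpow_mul h1a, ← Real.rpow_mul hM0]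
        have e1 : -q⁻¹ * (2:ℝ)⁻¹ = -(2*q)⁻¹ := by rw [mul_inv]; ring
        have e2 : q⁻¹ * (2:ℝ)⁻¹ = (2*q)⁻¹ := by rw [mul_inv]; ring
        rw [e1, e2]
lemma iter_lemma {θ α B H a b : ℝ} (hθ0 : 0 ≤ θ) (hθ1 : θ < 1) (hα : 0 < α) (hB : 0 ≤ B)
    (hab : a < b) (hH0 : 0 ≤ H) (h : ℝ → ℝ)
    (hbd : ∀ t, a ≤ t → t ≤ b → h t ≤ H)
    (key : ∀ ρ R, a ≤ ρ → ρ < R → R ≤ b → h ρ ≤ θ * h R + B * (R - ρ) ^ (-α)) :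
    h a ≤ (1 - ((1+θ)/2) ^ α⁻¹) ^ (-α) * (1 - θ * ((1+θ)/2)⁻¹)⁻¹
      * B * (b - a) ^ (-α) := by
  have hmid0 : (0:ℝ) < (1+θ)/2 := by linarith
  have hmid1 : (1+θ)/2 < 1 := by linarith
  set lam : ℝ := ((1+θ)/2) ^ (α⁻¹:ℝ) with hlamdef
  have hlam0 : 0 < lam := Real.rpow_pos_of_pos hmid0 _
  have hlam1 : lam < 1 := Real.rpow_lt_one hmid0.le hmid1 (inv_pos.2 hα)
  have hlampow : lam ^ (-α) = ((1+θ)/2)⁻¹ := by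
    rw [hlamdef, ← Real.rpow_mul hmid0.le]
    rw [show α⁻¹ * (-α) = -1 by field_simp]
    exact Real.rpow_neg_one _
  set m : ℝ := θ * ((1+θ)/2)⁻¹ with hmdef
  have hm0 : 0 ≤ m := mul_nonneg hθ0 (by positivity)
  have hm1 : m < 1 := by
    rw [hmdef, show ((1+θ)/2 : ℝ)⁻¹ = 2/(1+θ) by rw [inv_div], mul_div_assoc',
      div_lt_one (by linarith)]
    linarith
  set ρs : ℕ → ℝ := fun k => b - (b-a) * lam^k with hρs
  have hρ0 : ρs 0 = a := by simp [hρs]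
  have hmemb : ∀ k, a ≤ ρs k ∧ ρs k ≤ b := by
    intro k
    have h1 : lam^k ≤ 1 := pow_le_one₀ hlam0.le hlam1.le
    have h2 : 0 ≤ lam^k := pow_nonneg hlam0.le k
    have h3 := mul_nonneg (sub_nonneg.2 hab.le) (sub_nonneg.2 h1)
    have h4 := mul_nonneg (sub_nonneg.2 hab.le) h2
    constructor <;> simp only [hρs] <;> nlinarith
  have hstep : ∀ k, ρs k < ρs (k+1) := by
    intro k
    have h5 := pow_lt_pow_right_of_lt_one₀ hlam0 hlam1 (Nat.lt_succ_self k)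
    have hba : 0 < b - a := by linarith
    have h6 := mul_lt_mul_of_pos_left h5 hba
    simp only [Nat.succ_eq_add_one] at h6
    simp only [hρs]
    linarith
  have hgap : ∀ k : ℕ, ρs (k+1) - ρs k = ((b-a)*(1-lam)) * lam^k := by
    intro k
    simp only [hρs, pow_succ]
    ring
  have hgaprpow : ∀ k : ℕ, (ρs (k+1) - ρs k) ^ (-α)
      = ((b-a)*(1-lam)) ^ (-α) * (((1+θ)/2)⁻¹)^k := by
    intro k
    rw [hgap k, Real.mul_rpow (by nlinarith) (pow_nonneg hlam0.le k)]
    congr 1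
    rw [← Real.rpow_natCast lam k, ← Real.rpow_mul hlam0.le, mul_comm,
      Real.rpow_mul hlam0.le, Real.rpow_natCast, hlampow]
  set X : ℝ := ((b-a)*(1-lam)) ^ (-α) with hX
  have hX0 : 0 ≤ X := Real.rpow_nonneg (by nlinarith) _
  have claim : ∀ K : ℕ, h a ≤ θ^K * h (ρs K) + B * X * (∑ k ∈ Finset.range K, m^k) := by
    intro K
    induction K with
    | zero => simp [hρ0]
    | succ K ih =>
      have hk := key (ρs K) (ρs (K+1)) (hmemb K).1 (hstep K) (hmemb (K+1)).2
      rw [hgaprpow K] at hk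
      calc h a ≤ θ^K * h (ρs K) + B * X * (∑ k ∈ Finset.range K, m^k) := ih
        _ ≤ θ^K * (θ * h (ρs (K+1)) + B * (X * (((1+θ)/2)⁻¹)^K))
              + B * X * (∑ k ∈ Finset.range K, m^k) := by
            linarith [mul_le_mul_of_nonneg_left hk (pow_nonneg hθ0 K)]
        _ = θ^(K+1) * h (ρs (K+1)) + B * X * ((∑ k ∈ Finset.range K, m^k) + m^K) := by
            rw [hmdef, mul_pow, pow_succ]
            ring
        _ = θ^(K+1) * h (ρs (K+1)) + B * X * (∑ k ∈ Finset.range (K+1), m^k) := by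
            rw [Finset.sum_range_succ]
  have hsum : ∀ K : ℕ, (∑ k ∈ Finset.range K, m^k) ≤ (1-m)⁻¹ := by
    intro K
    have hgs := geom_sum_mul m K
    have h1m : 0 < 1 - m := by linarith
    have hinv : (1-m) * (1-m)⁻¹ = 1 := mul_inv_cancel₀ h1m.ne'
    nlinarith [pow_nonneg hm0 K]
  have hbound : ∀ K : ℕ, h a ≤ θ^K * H + B * X * (1-m)⁻¹ := by
    intro K
    refine (claim K).trans ?_
    have h1 : θ^K * h (ρs K) ≤ θ^K * H :=
      mul_le_mul_of_nonneg_left (hbd _ (hmemb K).1 (hmemb K).2) (pow_nonneg hθ0 K)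
    have h2 : B * X * (∑ k ∈ Finset.range K, m^k) ≤ B * X * (1-m)⁻¹ :=
      mul_le_mul_of_nonneg_left (hsum K) (mul_nonneg hB hX0)
    linarith
  have hlim : Tendsto (fun K : ℕ => θ^K * H + B * X * (1-m)⁻¹) atTop
      (nhds (0 * H + B * X * (1-m)⁻¹)) := by
    exact (((tendsto_pow_atTop_nhds_zero_of_lt_one hθ0 hθ1)).mul_const H).add_const _
  have hfin : h a ≤ 0 * H + B * X * (1-m)⁻¹ := ge_of_tendsto hlim
    (Eventually.of_forall hbound)
  rw [zero_mul, zero_add] at hfin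
  refine hfin.trans (le_of_eq ?_)
  rw [hX, Real.mul_rpow (by linarith) (by nlinarith)]
  ring

set_option maxHeartbeats 2000000 in
lemma down_step {p q : ℝ} (hp : 0 < p) (hpq : p < q) (hHL : HLp q) : HLp p := by
  obtain ⟨C, hC, hCf⟩ := hHL
  have hq : 0 < q := hp.trans hpq
  have hqp0 : (0:ℝ) < q - p := by linarith
  set θ : ℝ := (q - p)/q with hθdef
  have hθ0 : 0 < θ := div_pos hqp0 hq
  have hθ1 : θ < 1 := by rw [hθdef, div_lt_one hq]; linarith
  set α : ℝ := p⁻¹ with hαdef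
  have hα : 0 < α := inv_pos.2 hp
  set K0 : ℝ := (1 - ((1+θ)/2) ^ α⁻¹) ^ (-α) * (1 - θ * ((1+θ)/2)⁻¹)⁻¹ with hK0
  have hmid1 : (1+θ)/2 < 1 := by linarith
  have hlam1 : ((1+θ)/2 : ℝ) ^ (α⁻¹:ℝ) < 1 :=
    Real.rpow_lt_one (by linarith) hmid1 (inv_pos.2 hα)
  have hm1 : θ * ((1+θ)/2 : ℝ)⁻¹ < 1 := by
    rw [show ((1+θ)/2 : ℝ)⁻¹ = 2/(1+θ) by rw [inv_div], mul_div_assoc',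
      div_lt_one (by linarith)]
    linarith
  have hK0pos : 0 < K0 :=
    mul_pos (Real.rpow_pos_of_pos (by linarith) _) (inv_pos.2 (by linarith))
  have hCq : 0 < C ^ (q/p) := Real.rpow_pos_of_pos hC _
  refine ⟨K0 * ((p/q) * C ^ (q/p)) * 2 ^ (p⁻¹:ℝ), by positivity, ?_⟩
  rintro f ⟨hfd, hfb⟩ z hz
  have hfc : ContinuousOn f (Metric.ball 0 1) := hfd.continuousOn
  set a := ‖z‖ with hadef
  have ha0 : 0 ≤ a := norm_nonneg z
  have ha1 : a < 1 := by simpa [Complex.dist_eq] using hz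
  set b : ℝ := (1+a)/2 with hbdef
  have hab : a < b := by rw [hbdef]; linarith
  have hb1 : b < 1 := by rw [hbdef]; linarith
  set M : ℝ := ⨆ ρ : Set.Ico (0:ℝ) 1, hpMean f p ρ with hM
  have hMle : ∀ t:ℝ, 0 ≤ t → t < 1 → hpMean f p t ≤ M :=
    fun t ht0 ht1 => le_ciSup hfb ⟨t, ⟨ht0, ht1⟩⟩
  have hM0 : 0 ≤ M := (hpMean_nonneg f p 0).trans (hMle 0 le_rfl one_pos)
  set h : ℝ → ℝ :=
    fun t => sSup ((fun w => ‖f w‖) '' Metric.closedBall (0:ℂ) t) with hh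
  have hbdd : ∀ t:ℝ, t < 1 →
      BddAbove ((fun w => ‖f w‖) '' Metric.closedBall (0:ℂ) t) := by
    intro t ht
    refine (isCompact_closedBall (0:ℂ) t).bddAbove_image ?_
    exact continuous_norm.comp_continuousOn
      (hfc.mono (Metric.closedBall_subset_ball ht))
  have hfle : ∀ t:ℝ, t < 1 → ∀ w:ℂ, ‖w‖ ≤ t → ‖f w‖ ≤ h t := by
    intro t ht w hw
    exact le_csSup (hbdd t ht)
      (mem_image_of_mem _ (by simpa [Metric.mem_closedBall, Complex.dist_eq] using hw))
  have hh0 : ∀ t:ℝ, 0 ≤ t → t < 1 → 0 ≤ h t := fun t ht0 ht1 =>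
    (norm_nonneg (f 0)).trans (hfle t ht1 0 (by simpa using ht0))
  have hmono : ∀ t t':ℝ, 0 ≤ t → t ≤ t' → t' < 1 → h t ≤ h t' := by
    intro t t' ht0 htt' ht'
    refine csSup_le_csSup (hbdd t' ht')
      ⟨‖f 0‖, mem_image_of_mem _ (by simpa using ht0)⟩
      (Set.image_mono (Metric.closedBall_subset_closedBall htt'))
  have key : ∀ ρ R, a ≤ ρ → ρ < R → R ≤ b →
      h ρ ≤ θ * h R + ((p/q) * C^(q/p) * M^(p⁻¹)) * (R - ρ) ^ (-α) := by
    intro ρ R hρa hρR hRb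
    have hρ0 : 0 ≤ ρ := ha0.trans hρa
    have hR0 : 0 < R := lt_of_le_of_lt hρ0 hρR
    have hR1 : R < 1 := lt_of_le_of_lt hRb hb1
    have hRρ : 0 < R - ρ := by linarith
    have hhR0 : 0 ≤ h R := hh0 R hR0.le hR1
    set fR : ℂ → ℂ := fun w => f ((R:ℂ) * w) with hfR
    have hfRd : DifferentiableOn ℂ fR (Metric.ball 0 1) := by
      refine DifferentiableOn.comp hfd
        (((differentiable_const _).mul differentiable_id).differentiableOn) ?_
      intro w hw
      simp only [Metric.mem_ball, Complex.dist_eq, sub_zero] at hw ⊢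
      rw [norm_mul, Complex.norm_real, Real.norm_eq_abs, abs_of_pos hR0]
      calc R * ‖w‖ ≤ R * 1 := by nlinarith [norm_nonneg w]
        _ < 1 := by linarith
    have hfRc : ContinuousOn fR (Metric.ball 0 1) := hfRd.continuousOn
    have claim2 : ∀ r' : ℝ, 0 ≤ r' → r' < 1 → hpMean fR q r' ≤ (h R)^(q-p) * M := by
      intro r' hr'0 hr'1
      have hRr'0 : 0 ≤ R * r' := mul_nonneg hR0.le hr'0
      have hRr'1 : R * r' < 1 := by nlinarith
      have hptle : ∀ θ' : ℝ, ‖fR ((r':ℂ) * Complex.exp ((θ':ℝ) * Complex.I))‖ ^ q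
          ≤ (h R)^(q-p) *
            ‖f ((((R*r':ℝ)):ℂ) * Complex.exp ((θ':ℝ) * Complex.I))‖ ^ p := by
        intro θ'
        have heq : fR ((r':ℂ) * Complex.exp ((θ':ℝ) * Complex.I))
            = f ((((R*r':ℝ)):ℂ) * Complex.exp ((θ':ℝ) * Complex.I)) := by
          simp only [hfR]
          congr 1
          push_cast
          ring
        rw [heq]
        set x := ‖f ((((R*r':ℝ)):ℂ) * Complex.exp ((θ':ℝ) * Complex.I))‖ with hx
        have hx0 : 0 ≤ x := norm_nonneg _
        have hxle : x ≤ h R := by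
          refine hfle R hR1 _ ?_
          rw [norm_mul, Complex.norm_real, Real.norm_eq_abs, Complex.norm_exp_ofReal_mul_I, mul_one,
            abs_of_nonneg hRr'0]
          nlinarith
        calc x ^ q = x^(q-p) * x^p := by
              rw [show q = (q-p)+p by ring, Real.rpow_add' hx0 (by linarith)]
              ring_nf
          _ ≤ (h R)^(q-p) * x^p :=
              mul_le_mul_of_nonneg_right (Real.rpow_le_rpow hx0 hxle (by linarith))
                (Real.rpow_nonneg hx0 p)
      have hcont1 : Continuous fun θ' : ℝ =>
          ‖fR ((r':ℂ) * Complex.exp ((θ':ℝ) * Complex.I))‖ ^ q :=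
        (contAux hfRc hr'0 hr'1).rpow_const (fun _ => Or.inr hq.le)
      have hcont2 : Continuous fun θ' : ℝ => (h R)^(q-p) *
          ‖f ((((R*r':ℝ)):ℂ) * Complex.exp ((θ':ℝ) * Complex.I))‖ ^ p :=
        continuous_const.mul ((contAux hfc hRr'0 hRr'1).rpow_const (fun _ => Or.inr hp.le))
      unfold hpMean
      have hint := intervalIntegral.integral_mono_on (μ := volume) Real.two_pi_pos.le
        (hcont1.intervalIntegrable _ _) (hcont2.intervalIntegrable _ _)
        (fun θ' _ => hptle θ')
      calc (2*π)⁻¹ * ∫ θ' in (0:ℝ)..(2*π),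
            ‖fR (↑r' * Complex.exp (↑θ' * Complex.I))‖ ^ q
          ≤ (2*π)⁻¹ * ∫ θ' in (0:ℝ)..(2*π), (h R)^(q-p) *
              ‖f (↑(R*r') * Complex.exp (↑θ' * Complex.I))‖ ^ p :=
            mul_le_mul_of_nonneg_left hint (by positivity)
        _ = (h R)^(q-p) * ((2*π)⁻¹ * ∫ θ' in (0:ℝ)..(2*π),
              ‖f (↑(R*r') * Complex.exp (↑θ' * Complex.I))‖ ^ p) := by
            rw [intervalIntegral.integral_const_mul]
            ring
        _ ≤ (h R)^(q-p) * M :=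
            mul_le_mul_of_nonneg_left (hMle (R*r') hRr'0 hRr'1) (Real.rpow_nonneg hhR0 _)
    have hfRb : BddAbove (Set.range fun r' : Set.Ico (0:ℝ) 1 => hpMean fR q r') := by
      refine ⟨(h R)^(q-p) * M, ?_⟩
      rintro x ⟨r', rfl⟩
      exact claim2 r' r'.2.1 r'.2.2
    have hfRsup : (⨆ r' : Set.Ico (0:ℝ) 1, hpMean fR q r') ≤ (h R)^(q-p) * M :=
      ciSup_le fun r' => claim2 r' r'.2.1 r'.2.2
    have hfRsup0 : 0 ≤ ⨆ r' : Set.Ico (0:ℝ) 1, hpMean fR q r' :=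
      (hpMean_nonneg fR q 0).trans (le_ciSup hfRb ⟨(0:ℝ), ⟨le_rfl, zero_lt_one⟩⟩)
    have claim1 : ∀ w : ℂ, ‖w‖ ≤ ρ →
        ‖f w‖ ≤ (C * (R-ρ)^(-q⁻¹) * M^q⁻¹) * ((h R)^((q-p)/q)) := by
      intro w hw
      have hw' : ‖w / (R:ℂ)‖ ≤ ρ / R := by
        rw [norm_div, Complex.norm_real, Real.norm_eq_abs, abs_of_pos hR0]
        exact div_le_div_of_nonneg_right hw hR0.le
      have hwball : w / (R:ℂ) ∈ Metric.ball (0:ℂ) 1 := by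
        simp only [Metric.mem_ball, Complex.dist_eq, sub_zero]
        calc ‖w / (R:ℂ)‖ ≤ ρ/R := hw'
          _ < 1 := by rw [div_lt_one hR0]; exact hρR
      have hkey := hCf fR ⟨hfRd, hfRb⟩ (w / (R:ℂ)) hwball
      have hfRw : fR (w / (R:ℂ)) = f w := by
        simp only [hfR]
        congr 1
        have : ((R:ℝ):ℂ) ≠ 0 := Complex.ofReal_ne_zero.2 hR0.ne'
        field_simp
      rw [hfRw] at hkey
      have e1 : (1 - ‖w / (R:ℂ)‖) ^ (-q⁻¹) ≤ (R - ρ) ^ (-q⁻¹) := by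
        refine Real.rpow_le_rpow_of_nonpos hRρ ?_ (neg_nonpos.2 (inv_nonneg.2 hq.le))
        have h2 : ρ / R ≤ 1 - (R - ρ) := by
          rw [div_le_iff₀ hR0]
          nlinarith
        linarith [hw']
      have e2 : (⨆ r' : Set.Ico (0:ℝ) 1, hpMean fR q r') ^ q⁻¹ ≤ ((h R)^(q-p) * M) ^ q⁻¹ :=
        Real.rpow_le_rpow hfRsup0 hfRsup (inv_nonneg.2 hq.le)
      have e3 : ((h R)^(q-p) * M) ^ q⁻¹ = (h R)^((q-p)/q) * M^q⁻¹ := by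
        rw [Real.mul_rpow (Real.rpow_nonneg hhR0 _) hM0, ← Real.rpow_mul hhR0,
          show (q-p) * q⁻¹ = (q-p)/q from (div_eq_mul_inv _ _).symm]
      calc ‖f w‖
          ≤ C * (1 - ‖w / (R:ℂ)‖) ^ (-q⁻¹)
            * (⨆ r' : Set.Ico (0:ℝ) 1, hpMean fR q r') ^ q⁻¹ := hkey
        _ ≤ C * (R-ρ)^(-q⁻¹) * (((h R)^(q-p) * M) ^ q⁻¹) := by
            refine mul_le_mul (mul_le_mul_of_nonneg_left e1 hC.le) e2
              (Real.rpow_nonneg hfRsup0 _)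
              (mul_nonneg hC.le (Real.rpow_nonneg hRρ.le _))
        _ = (C * (R-ρ)^(-q⁻¹) * M^q⁻¹) * ((h R)^((q-p)/q)) := by
            rw [e3]; ring
    have hhρ : h ρ ≤ (C * (R-ρ)^(-q⁻¹) * M^q⁻¹) * ((h R)^((q-p)/q)) := by
      refine Real.sSup_le ?_ ?_
      · rintro x ⟨w, hwmem, rfl⟩
        refine claim1 w ?_
        simpa [Metric.mem_closedBall, Complex.dist_eq] using hwmem
      · exact mul_nonneg (mul_nonneg (mul_nonneg hC.le (Real.rpow_nonneg hRρ.le _))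
          (Real.rpow_nonneg hM0 _)) (Real.rpow_nonneg hhR0 _)
    have hconj : (q/p).HolderConjugate (q/(q-p)) := by
      rw [Real.holderConjugate_iff]
      constructor
      · rw [lt_div_iff₀ hp]; linarith
      · rw [inv_div, inv_div]
        field_simp
        ring
    have hyoung := Real.young_inequality_of_nonneg
      (a := C * (R-ρ)^(-q⁻¹) * M^q⁻¹) (b := (h R)^((q-p)/q))
      (mul_nonneg (mul_nonneg hC.le (Real.rpow_nonneg hRρ.le _)) (Real.rpow_nonneg hM0 _))
      (Real.rpow_nonneg hhR0 _) hconj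
    have e4 : ((h R)^((q-p)/q)) ^ (q/(q-p)) = h R := by
      rw [← Real.rpow_mul hhR0, show (q-p)/q * (q/(q-p)) = 1 by
        field_simp, Real.rpow_one]
    have e5 : (C * (R-ρ)^(-q⁻¹) * M^q⁻¹) ^ (q/p)
        = C^(q/p) * (R-ρ)^(-p⁻¹) * M^(p⁻¹) := by
      rw [Real.mul_rpow (mul_nonneg hC.le (Real.rpow_nonneg hRρ.le _)) (Real.rpow_nonneg hM0 _),
        Real.mul_rpow hC.le (Real.rpow_nonneg hRρ.le _),
        ← Real.rpow_mul hRρ.le, ← Real.rpow_mul hM0,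
        show -q⁻¹ * (q/p) = -p⁻¹ by field_simp,
        show q⁻¹ * (q/p) = p⁻¹ by field_simp]
    rw [e4, e5] at hyoung
    have hqp_ne : q/(q-p) ≠ 0 := by positivity
    have e6 : h R / (q/(q-p)) = θ * h R := by
      rw [div_div_eq_mul_div, hθdef]
      ring
    have e7 : C^(q/p) * (R-ρ)^(-p⁻¹) * M^(p⁻¹) / (q/p)
        = ((p/q) * C^(q/p) * M^(p⁻¹)) * (R - ρ) ^ (-α) := by
      rw [hαdef, div_div_eq_mul_div]
      field_simp
    rw [e6, e7] at hyoung
    linarith [hhρ, hyoung]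
  -- apply the iteration lemma
  have hBpos : 0 ≤ (p/q) * C^(q/p) * M^(p⁻¹) :=
    mul_nonneg (mul_nonneg (by positivity) hCq.le) (Real.rpow_nonneg hM0 _)
  have hhb0 : 0 ≤ h b := hh0 b (by linarith) hb1
  have hiter := iter_lemma hθ0.le hθ1 hα hBpos hab hhb0 h
    (fun t ht1 ht2 => hmono t b (by linarith) ht2 hb1) key
  have hfz : ‖f z‖ ≤ h a := by
    refine hfle a ha1 z ?_
    rw [hadef]
  have hba : b - a = (1-a)/2 := by rw [hbdef]; ring
  have e8 : ((1-a)/2 : ℝ)^(-α) = (1-a)^(-α) * 2^(p⁻¹:ℝ) := by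
    rw [Real.div_rpow (by linarith) (by norm_num),
      Real.rpow_neg (by norm_num : (0:ℝ) ≤ 2), div_eq_mul_inv, inv_inv, hαdef]
  calc ‖f z‖ ≤ h a := hfz
    _ ≤ K0 * ((p/q) * C^(q/p) * M^(p⁻¹)) * (b - a) ^ (-α) := hiter
    _ = K0 * ((p/q) * C ^ (q/p)) * 2 ^ (p⁻¹:ℝ) * (1 - a) ^ (-p⁻¹) * M ^ p⁻¹ := by
        rw [hba, e8, hαdef]
        ring

lemma HLp_two_pow : ∀ k : ℕ, HLp (2 * 2^k) := by
  intro k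
  induction k with
  | zero => simpa using base2
  | succ k ih =>
      have := up_step (by positivity) ih
      have heq : (2:ℝ) * (2 * 2^k) = 2 * 2^(k+1) := by ring
      rwa [heq] at this

/-- The Hardy–Littlewood pointwise estimate `|f(z)| ≤ C_p (1-|z|)^{-1/p} ‖f‖_{H^p}`,
with a constant depending only on `p`. -/
theorem hardy_littlewood_pointwise (p : ℝ) (hp : 0 < p) :
    ∃ C > (0:ℝ), ∀ f : ℂ → ℂ, MemHp p f →
      ∀ z ∈ Metric.ball (0:ℂ) 1,
        ‖f z‖ ≤
          C * (1 - ‖z‖) ^ (-p⁻¹) *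
            (⨆ r : Set.Ico (0:ℝ) 1, hpMean f p r) ^ p⁻¹ := by
  obtain ⟨k, hk⟩ := pow_unbounded_of_one_lt p (one_lt_two (α := ℝ))
  have hk2 : p < 2 * 2^k := by
    have : (0:ℝ) < 2^k := by positivity
    linarith
  exact down_step hp hk2 (HLp_two_pow k)
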